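/- Let X ∈ so(p,q) be an ℝ-diagonalizable (hyperbolic) element, and let V ⊂ ℝ^{p,q} be a maximally isotropic X-invariant subspace on which X acts as λ·id with λ ≠ 0 (so dim V = min(p,q) = p, say p ≤ q). Then there exists a maximally isotropic subspace V' such that V ⊕ V' is nondegenerate of signature (p,p), X acts as −λ·id on V', and X vanishes on the orthogonal complement (V ⊕ V')^⊥. -/

import Mathlib

/-- The standard symmetric bilinear form of signature `(p,q)` on `ℝ^{p+q}`
(first `p` coordinates negative). -/
def pform (p q : ℕ) (x y : Fin (p + q) → ℝ) : ℝ :=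
  ∑ i : Fin (p + q), (if i.val < p then (-1 : ℝ) else 1) * x i * y i

section PformAux

variable {p q : ℕ}

lemma pform_add_left (x y z : Fin (p + q) → ℝ) :
    pform p q (x + y) z = pform p q x z + pform p q y z := by
  unfold pform
  rw [← Finset.sum_add_distrib]
  exact Finset.sum_congr rfl fun i _ => by simp only [Pi.add_apply]; ring

lemma pform_add_right (x y z : Fin (p + q) → ℝ) :
    pform p q x (y + z) = pform p q x y + pform p q x z := by
  unfold pform
  rw [← Finset.sum_add_distrib]
  exact Finset.sum_congr rfl fun i _ => by simp only [Pi.add_apply]; ring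

lemma pform_smul_left (c : ℝ) (x z : Fin (p + q) → ℝ) :
    pform p q (c • x) z = c * pform p q x z := by
  unfold pform
  rw [Finset.mul_sum]
  exact Finset.sum_congr rfl fun i _ => by simp only [Pi.smul_apply, smul_eq_mul]; ring

lemma pform_smul_right (c : ℝ) (x z : Fin (p + q) → ℝ) :
    pform p q x (c • z) = c * pform p q x z := by
  unfold pform
  rw [Finset.mul_sum]
  exact Finset.sum_congr rfl fun i _ => by simp only [Pi.smul_apply, smul_eq_mul]; ring

def pB (p q : ℕ) : (Fin (p + q) → ℝ) →ₗ[ℝ] (Fin (p + q) → ℝ) →ₗ[ℝ] ℝ :=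
  LinearMap.mk₂ ℝ (pform p q) pform_add_left pform_smul_left pform_add_right pform_smul_right

lemma pB_apply (x y : Fin (p + q) → ℝ) : pB p q x y = pform p q x y := rfl

lemma pform_nondeg (x : Fin (p + q) → ℝ) (h : ∀ y, pform p q x y = 0) : x = 0 := by
  funext i
  have h1 := h (Pi.single i 1)
  unfold pform at h1
  rw [Finset.sum_eq_single i] at h1
  · by_cases hi : i.val < p <;> simp [hi] at h1 <;> simpa using h1
  · intro j _ hj
    simp [Pi.single_apply, hj]
  · simp

lemma pform_sum_smul_right {ι : Type*} (x : Fin (p + q) → ℝ) (s : Finset ι)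
    (c : ι → ℝ) (f : ι → Fin (p + q) → ℝ) :
    pform p q x (∑ i ∈ s, c i • f i) = ∑ i ∈ s, c i * pform p q x (f i) := by
  rw [← pB_apply, map_sum]
  exact Finset.sum_congr rfl fun i _ => by rw [map_smul]; rfl

lemma pform_sum_smul_left {ι : Type*} (x : Fin (p + q) → ℝ) (s : Finset ι)
    (c : ι → ℝ) (f : ι → Fin (p + q) → ℝ) :
    pform p q (∑ i ∈ s, c i • f i) x = ∑ i ∈ s, c i * pform p q (f i) x := by
  rw [← pB_apply, map_sum, LinearMap.sum_apply]
  exact Finset.sum_congr rfl fun i _ => by rw [map_smul]; rfl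

lemma iso_finrank_le (W : Submodule ℝ (Fin (p + q) → ℝ))
    (h : ∀ v ∈ W, ∀ w ∈ W, pform p q v w = 0) :
    Module.finrank ℝ W ≤ p := by
  let g : W →ₗ[ℝ] (Fin p → ℝ) :=
    { toFun := fun w j => (w : Fin (p + q) → ℝ) (Fin.castAdd q j)
      map_add' := fun a b => rfl
      map_smul' := fun c a => rfl }
  have hinj : Function.Injective g := by
    rw [← LinearMap.ker_eq_bot, Submodule.eq_bot_iff]
    intro w hw
    have hco : ∀ j : Fin (p + q), j.val < p → (w : Fin (p + q) → ℝ) j = 0 := by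
      intro j hj
      have := congrFun (show g w = 0 from hw) ⟨j.val, hj⟩
      simpa [g, Fin.castAdd, Fin.castLE] using this
    have hww := h w w.2 w w.2
    unfold pform at hww
    have hnn : ∀ i ∈ Finset.univ, (0:ℝ) ≤
        (if (i : Fin (p+q)).val < p then (-1:ℝ) else 1) * (w : Fin (p+q) → ℝ) i * (w : Fin (p+q) → ℝ) i := by
      intro i _
      by_cases hi : i.val < p
      · simp [hi, hco i hi]
      · simp only [hi, if_neg, one_mul]
        simpa [hi] using mul_self_nonneg ((w : Fin (p+q) → ℝ) i)
    have hz := (Finset.sum_eq_zero_iff_of_nonneg hnn).mp hww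
    have : (w : Fin (p + q) → ℝ) = 0 := by
      funext i
      by_cases hi : i.val < p
      · exact hco i hi
      · have := hz i (Finset.mem_univ i)
        simp only [hi, if_neg] at this
        simpa [mul_self_eq_zero] using this
    exact Subtype.ext this
  calc Module.finrank ℝ W ≤ Module.finrank ℝ (Fin p → ℝ) :=
        LinearMap.finrank_le_finrank_of_injective hinj
    _ = p := by simp

end PformAux

/-- Let `X ∈ so(p,q)` (`p ≤ q`) be an ℝ-diagonalizable element and
`V ⊂ ℝ^{p,q}` a maximally isotropic (`dim V = p`) `X`-invariant subspace on which `X`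
acts as `λ·id`, `λ ≠ 0`. Then there is a maximally isotropic subspace `V'` on which `X`
acts as `−λ·id`, such that `V ⊕ V'` is nondegenerate of signature `(p,p)` and `X`
vanishes on `(V ⊕ V')^⊥`. -/
theorem hyperbolic_isometric_element
    (p q : ℕ) (hpq : p ≤ q)
    (X : (Fin (p + q) → ℝ) →ₗ[ℝ] (Fin (p + q) → ℝ))
    (hskew : ∀ x y, pform p q (X x) y + pform p q x (X y) = 0)
    (hdiag : ∃ (bb : Module.Basis (Fin (p + q)) ℝ (Fin (p + q) → ℝ)) (μ : Fin (p + q) → ℝ),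
      ∀ i, X (bb i) = μ i • bb i)
    (lam : ℝ) (hlam : lam ≠ 0)
    (V : Submodule ℝ (Fin (p + q) → ℝ))
    (hViso : ∀ v ∈ V, ∀ w ∈ V, pform p q v w = 0)
    (hVdim : Module.finrank ℝ V = p)
    (hXV : ∀ v ∈ V, X v = lam • v) :
    ∃ V' : Submodule ℝ (Fin (p + q) → ℝ),
      (∀ v ∈ V', ∀ w ∈ V', pform p q v w = 0) ∧
      Module.finrank ℝ V' = p ∧
      (∀ v ∈ V', X v = (-lam) • v) ∧
      V ⊓ V' = ⊥ ∧
      Module.finrank ℝ (V ⊔ V' : Submodule ℝ (Fin (p + q) → ℝ)) = 2 * p ∧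
      (∀ v ∈ V ⊔ V', (∀ w ∈ V ⊔ V', pform p q v w = 0) → v = 0) ∧
      (∀ w : Fin (p + q) → ℝ, (∀ u ∈ V ⊔ V', pform p q w u = 0) → X w = 0) := by
  classical
  obtain ⟨bb, μ, hbb⟩ := hdiag
  -- orthogonality of eigenvectors with non-opposite eigenvalues
  have orth : ∀ (a b : ℝ) (x y : Fin (p + q) → ℝ), X x = a • x → X y = b • y →
      a + b ≠ 0 → pform p q x y = 0 := by
    intro a b x y hx hy hab
    have h := hskew x y
    rw [hx, hy, pform_smul_left, pform_smul_right] at h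
    have h2 : (a + b) * pform p q x y = 0 := by ring_nf; ring_nf at h; linarith
    exact (mul_eq_zero.mp h2).resolve_left hab
  -- the key claim restricting eigenvalues
  have claim : ∀ i, μ i = 0 ∨ μ i = -lam ∨ (μ i = lam ∧ bb i ∈ V) := by
    intro i
    by_contra hcon
    push_neg at hcon
    obtain ⟨h0, hm, hl⟩ := hcon
    have hbnV : bb i ∉ V := by
      by_cases he : μ i = lam
      · exact hl he
      · intro hmem
        have h1 := hXV _ hmem
        rw [hbb i] at h1
        have h2 : (μ i - lam) • bb i = 0 := by rw [sub_smul, h1, sub_self]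
        rcases smul_eq_zero.mp h2 with h | h
        · exact he (by linarith [sub_eq_zero.mp (by linarith : μ i - lam = 0)])
        · exact bb.ne_zero i h
    set U : Submodule ℝ (Fin (p + q) → ℝ) := V ⊔ Submodule.span ℝ {bb i} with hU
    have hiso : ∀ v ∈ U, ∀ w ∈ U, pform p q v w = 0 := by
      intro v hv w hw
      obtain ⟨v1, hv1, v2, hv2, rfl⟩ := Submodule.mem_sup.mp hv
      obtain ⟨w1, hw1, w2, hw2, rfl⟩ := Submodule.mem_sup.mp hw
      obtain ⟨c, rfl⟩ := Submodule.mem_span_singleton.mp hv2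
      obtain ⟨d, rfl⟩ := Submodule.mem_span_singleton.mp hw2
      have hlm : lam + μ i ≠ 0 := fun h => hm (by linarith)
      have hml : μ i + lam ≠ 0 := fun h => hm (by linarith)
      have hmm : μ i + μ i ≠ 0 := fun h => h0 (by linarith)
      rw [pform_add_left, pform_add_right, pform_add_right, pform_smul_left,
        pform_smul_left, pform_smul_right, pform_smul_right,
        hViso v1 hv1 w1 hw1,
        orth lam (μ i) v1 (bb i) (hXV v1 hv1) (hbb i) hlm,
        orth (μ i) lam (bb i) w1 (hbb i) (hXV w1 hw1) hml,
        orth (μ i) (μ i) (bb i) (bb i) (hbb i) (hbb i) hmm]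
      ring
    have hinf : V ⊓ Submodule.span ℝ {bb i} = ⊥ := by
      rw [Submodule.eq_bot_iff]
      rintro x ⟨hx1, hx2⟩
      obtain ⟨c, rfl⟩ := Submodule.mem_span_singleton.mp hx2
      rcases eq_or_ne c 0 with rfl | hc
      · simp
      · exact absurd ((Submodule.smul_mem_iff V hc).mp hx1) hbnV
    have hd := Submodule.finrank_sup_add_finrank_inf_eq V (Submodule.span ℝ {bb i})
    rw [hinf, hVdim, finrank_span_singleton (bb.ne_zero i)] at hd
    have := iso_finrank_le U hiso
    simp [U] at this hd
    omega
  -- the candidate V'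
  set V' : Submodule ℝ (Fin (p + q) → ℝ) :=
    Submodule.span ℝ (bb '' {i | μ i = -lam}) with hV'def
  have hXV' : ∀ v ∈ V', X v = (-lam) • v := by
    intro v hv
    induction hv using Submodule.span_induction with
    | mem x hx =>
      obtain ⟨i, hi, rfl⟩ := hx
      rw [hbb i, hi]
    | zero => simp
    | add x y _ _ hx hy => rw [map_add, hx, hy, smul_add]
    | smul c x _ hx => rw [map_smul, hx, smul_comm]
  have hV'iso : ∀ v ∈ V', ∀ w ∈ V', pform p q v w = 0 := by
    intro v hv w hw
    exact orth (-lam) (-lam) v w (hXV' v hv) (hXV' w hw)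
      (fun h => hlam (by linarith))
  -- killing lemmas
  have killA : ∀ a, X a = lam • a → (∀ w ∈ V', pform p q a w = 0) → a = 0 := by
    intro a ha hw
    apply pform_nondeg
    intro y
    have hy := bb.sum_repr y
    rw [← hy, pform_sum_smul_right]
    apply Finset.sum_eq_zero
    intro i _
    rcases claim i with h | h | ⟨h, _⟩
    · rw [orth lam 0 a (bb i) ha (by rw [hbb i, h]) (by simpa using hlam), mul_zero]
    · rw [hw (bb i) (Submodule.subset_span ⟨i, h, rfl⟩), mul_zero]
    · rw [orth lam lam a (bb i) ha (by rw [hbb i, h]) (fun hc => hlam (by linarith)),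
        mul_zero]
  have killB : ∀ b, X b = (-lam) • b → (∀ w ∈ V, pform p q b w = 0) → b = 0 := by
    intro b hb hw
    apply pform_nondeg
    intro y
    have hy := bb.sum_repr y
    rw [← hy, pform_sum_smul_right]
    apply Finset.sum_eq_zero
    intro i _
    rcases claim i with h | h | ⟨h, hmem⟩
    · rw [orth (-lam) 0 b (bb i) hb (by rw [hbb i, h]) (by simpa using hlam), mul_zero]
    · rw [orth (-lam) (-lam) b (bb i) hb (by rw [hbb i, h])
        (fun hc => hlam (by linarith)), mul_zero]
    · rw [hw (bb i) hmem, mul_zero]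
  -- V ⊓ V' = ⊥
  have hinf : V ⊓ V' = ⊥ := by
    rw [Submodule.eq_bot_iff]
    rintro x ⟨hx1, hx2⟩
    have h1 := hXV x hx1
    have h2 := hXV' x hx2
    have h3 : (lam - -lam) • x = 0 := by rw [sub_smul, ← h1, ← h2, sub_self]
    rcases smul_eq_zero.mp h3 with h | h
    · exact absurd (by linarith [h] : lam = 0) hlam
    · exact h
  -- dimension of V'
  have hV'le : Module.finrank ℝ V' ≤ p := iso_finrank_le V' hV'iso
  have hV'ge : p ≤ Module.finrank ℝ V' := by
    let f : V →ₗ[ℝ] Module.Dual ℝ V' := ((pB p q).compl₂ V'.subtype).domRestrict V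
    have hfinj : Function.Injective f := by
      rw [← LinearMap.ker_eq_bot, Submodule.eq_bot_iff]
      intro v hv
      have hv0 : ∀ w ∈ V', pform p q (v : Fin (p + q) → ℝ) w = 0 := by
        intro w hw
        have h := LinearMap.congr_fun (show f v = 0 from hv) ⟨w, hw⟩
        simpa [f, pB_apply] using h
      exact Subtype.ext (killA v (hXV v v.2) hv0)
    have := LinearMap.finrank_le_finrank_of_injective hfinj
    rw [hVdim, Subspace.dual_finrank_eq] at this
    exact this
  have hV'dim : Module.finrank ℝ V' = p := le_antisymm hV'le hV'ge
  -- dimension of the sup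
  have hsupdim : Module.finrank ℝ (V ⊔ V' : Submodule ℝ (Fin (p + q) → ℝ)) = 2 * p := by
    have hd := Submodule.finrank_sup_add_finrank_inf_eq V V'
    rw [hinf, hVdim, hV'dim] at hd
    simp at hd
    omega
  -- nondegeneracy on the sup
  have hnd : ∀ v ∈ V ⊔ V', (∀ w ∈ V ⊔ V', pform p q v w = 0) → v = 0 := by
    intro v hv hall
    obtain ⟨a, ha, b, hb, rfl⟩ := Submodule.mem_sup.mp hv
    have hb0 : b = 0 := by
      apply killB b (hXV' b hb)
      intro w hw
      have h1 := hall w (Submodule.mem_sup_left hw)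
      rw [pform_add_left, hViso a ha w hw, zero_add] at h1
      exact h1
    have ha0 : a = 0 := by
      apply killA a (hXV a ha)
      intro w hw
      have h1 := hall w (Submodule.mem_sup_right hw)
      rw [pform_add_left, hV'iso b hb w hw, add_zero] at h1
      exact h1
    rw [ha0, hb0, add_zero]
  -- X vanishes on the orthogonal complement
  have hperp : ∀ w : Fin (p + q) → ℝ, (∀ u ∈ V ⊔ V', pform p q w u = 0) → X w = 0 := by
    intro w hw
    set c : Fin (p + q) → ℝ := fun i => bb.repr w i with hc
    set a : Fin (p + q) → ℝ := ∑ i ∈ Finset.univ.filter (fun i => μ i = lam), c i • bb i with hadef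
    set b : Fin (p + q) → ℝ := ∑ i ∈ (Finset.univ.filter (fun i => ¬ μ i = lam)).filter
      (fun i => μ i = -lam), c i • bb i with hbdef
    set z : Fin (p + q) → ℝ := ∑ i ∈ (Finset.univ.filter (fun i => ¬ μ i = lam)).filter
      (fun i => ¬ μ i = -lam), c i • bb i with hzdef
    have hsplit : w = a + b + z := by
      have h1 := Finset.sum_filter_add_sum_filter_not Finset.univ (fun i => μ i = lam)
        (fun i => c i • bb i)
      have h2 := Finset.sum_filter_add_sum_filter_not
        (Finset.univ.filter (fun i => ¬ μ i = lam)) (fun i => μ i = -lam)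
        (fun i => c i • bb i)
      have h3 := bb.sum_repr w
      rw [hadef, hbdef, hzdef, add_assoc, h2, h1]
      exact h3.symm
    have haV : a ∈ V := by
      apply Submodule.sum_mem
      intro i hi
      rw [Finset.mem_filter] at hi
      rcases claim i with h | h | ⟨_, hmem⟩
      · exact (hlam (hi.2.symm.trans h)).elim
      · have hll : lam = -lam := hi.2.symm.trans h
        exact (hlam (by linarith)).elim
      · exact Submodule.smul_mem V _ hmem
    have hbV' : b ∈ V' := by
      apply Submodule.sum_mem
      intro i hi
      rw [Finset.mem_filter] at hi
      exact Submodule.smul_mem V' _ (Submodule.subset_span ⟨i, hi.2, rfl⟩)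
    have hXa : X a = lam • a := by
      rw [hadef, map_sum, Finset.smul_sum]
      apply Finset.sum_congr rfl
      intro i hi
      rw [Finset.mem_filter] at hi
      rw [map_smul, hbb i, hi.2, smul_comm]
    have hXb : X b = (-lam) • b := hXV' b hbV'
    have hXz : X z = 0 := by
      rw [hzdef, map_sum]
      apply Finset.sum_eq_zero
      intro i hi
      rw [Finset.mem_filter, Finset.mem_filter] at hi
      have h0 : μ i = 0 := by
        rcases claim i with h | h | ⟨h, _⟩
        · exact h
        · exact absurd h hi.2
        · exact absurd h hi.1.2
      rw [map_smul, hbb i, h0, zero_smul, smul_zero]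
    have hz00 : X z = (0:ℝ) • z := by rw [zero_smul]; exact hXz
    have ha0 : a = 0 := by
      apply killA a hXa
      intro u hu
      have h1 := hw u (Submodule.mem_sup_right hu)
      rw [hsplit, pform_add_left, pform_add_left, hV'iso b hbV' u hu,
        orth 0 (-lam) z u hz00 (hXV' u hu)
          (by simpa using hlam), add_zero, add_zero] at h1
      exact h1
    have hb0 : b = 0 := by
      apply killB b hXb
      intro u hu
      have h1 := hw u (Submodule.mem_sup_left hu)
      rw [hsplit, pform_add_left, pform_add_left, hViso a haV u hu,
        orth 0 lam z u hz00 (hXV u hu) (by simpa using hlam),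
        add_zero, zero_add] at h1
      exact h1
    rw [hsplit, ha0, hb0, map_add, map_add, hXz]
    simp
  exact ⟨V', hV'iso, hV'dim, hXV', hinf, hsupdim, hnd, hperp⟩
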